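/- If some cycle of the induced pair permutation α' on 2-element subsets of {1,...,n} has odd length, then α has either at least two fixed points or some cycle of length ≥ 2 whose length is not divisible by 4. -/

import Mathlib

set_option linter.unusedVariables false

/-- The position `p_{ij}` of the pair `{i,j}` (1-based labels `i<j` in `{1,...,n}`),
namely `(2n-i)(i-1)/2 + (j-i)`, expressed on `Sym2 (Fin n)` (vertex `a : Fin n`
carries the label `a+1`). -/
def pairIndex (n : Nat) (e : Sym2 (Fin n)) : Nat :=
  Sym2.lift ⟨fun a b =>
      (2 * n - (min a.val b.val + 1)) * (min a.val b.val) / 2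
        + (max a.val b.val - min a.val b.val),
    fun a b => by simp [min_comm, max_comm]⟩ e

open scoped Classical in
/-- The index `N(G) = Σ_{ij ∈ E(G)} 2^(λ - p_ij)` of a labelled graph, `λ = C(n,2)`. -/
noncomputable def graphIndex (n : Nat) (G : SimpleGraph (Fin n)) : Nat :=
  ∑ e ∈ G.edgeSet.toFinset, 2 ^ (n.choose 2 - pairIndex n e)

/-- The pair permutation `α'` induced on `Sym2 (Fin n)` by `α'{i,j} = {αi,αj}`. -/
def pairPerm {n : Nat} (α : Equiv.Perm (Fin n)) : Equiv.Perm (Sym2 (Fin n)) where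
  toFun := Sym2.map α
  invFun := Sym2.map α.symm
  left_inv e := by induction e using Sym2.ind with | _ a b => simp
  right_inv e := by induction e using Sym2.ind with | _ a b => simp

/-- The relabelled graph `αG`, whose edge set is `{{αi,αj} : {i,j} ∈ E(G)}`. -/
def mapGraph {n : Nat} (α : Equiv.Perm (Fin n)) (G : SimpleGraph (Fin n)) :
    SimpleGraph (Fin n) where
  Adj a b := G.Adj (α.symm a) (α.symm b)
  symm := ⟨fun a b h => G.symm.symm _ _ h⟩
  loopless := ⟨fun a h => G.loopless.irrefl _ h⟩

private lemma pairPerm_pow_apply {n : Nat} (α : Equiv.Perm (Fin n)) (k : ℕ)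
    (z : Sym2 (Fin n)) : ((pairPerm α) ^ k) z = Sym2.map (α ^ k) z := by
  induction k generalizing z with
  | zero => simp [Sym2.map_id']
  | succ k ih =>
    rw [pow_succ, Equiv.Perm.mul_apply, ih,
      show (pairPerm α) z = Sym2.map α z from rfl, Sym2.map_map, pow_succ,
      Equiv.Perm.coe_mul]

private lemma card_dvd_of_pow_apply_eq {n : Nat} (α : Equiv.Perm (Fin n)) (a : Fin n)
    (h : α a ≠ a) {m : ℕ} (hm : (α ^ m) a = a) : (α.cycleOf a).support.card ∣ m := by
  have hmem : a ∈ (α.cycleOf a).support :=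
    (Equiv.Perm.mem_support_cycleOf_iff' h).2 (Equiv.Perm.SameCycle.refl α a)
  exact ((α.isCycleOn_support_cycleOf a).pow_apply_eq hmem).mp hm

/-- If some cycle of the induced pair permutation `α'` on 2-element subsets has
odd length, then `α` has at least two fixed points or some cycle of length `≥ 2`
whose length is not divisible by `4`. -/
theorem stmt13 (n : Nat) (α : Equiv.Perm (Fin n)) (e : Sym2 (Fin n))
    (he : ¬ e.IsDiag)
    (hodd : ¬ 2 ∣ Nat.card {f : Sym2 (Fin n) // (pairPerm α).SameCycle e f}) :
    ¬ {x : Fin n | α x = x}.Subsingleton ∨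
      ∃ x : Fin n, α x ≠ x ∧ ¬ 4 ∣ (α.cycleOf x).support.card := by
  by_contra hcon
  push_neg at hcon
  obtain ⟨hfix, hcyc⟩ := hcon
  set β := pairPerm α with hβ
  set m := Nat.card {f : Sym2 (Fin n) // β.SameCycle e f} with hm
  have hmodd : m % 2 = 1 := Nat.two_dvd_ne_zero.mp hodd
  have hβm : (β ^ m) e = e := by
    by_cases hfe : β e = e
    · exact Equiv.Perm.pow_apply_eq_self_of_apply_eq_self hfe m
    · have hmem : e ∈ (β.cycleOf e).support :=
        (Equiv.Perm.mem_support_cycleOf_iff' hfe).2 (Equiv.Perm.SameCycle.refl β e)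
      have hcard : m = (β.cycleOf e).support.card := by
        have hset : {f : Sym2 (Fin n) | β.SameCycle e f} = ↑(β.cycleOf e).support := by
          ext f
          simp [Equiv.Perm.mem_support_cycleOf_iff' hfe]
        rw [hm]
        have : Nat.card {f : Sym2 (Fin n) // β.SameCycle e f}
            = Nat.card {f : Sym2 (Fin n) | β.SameCycle e f} := rfl
        rw [this, Nat.card_coe_set_eq, hset, Set.ncard_coe_finset]
      rw [hcard]
      exact ((β.isCycleOn_support_cycleOf e).pow_apply_eq hmem).mpr dvd_rfl
  obtain ⟨a, b, rfl⟩ : ∃ a b, e = s(a, b) := Sym2.exists.mp ⟨e, Eq.refl e⟩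
  have hne : a ≠ b := by simpa using he
  have hpow : (β ^ m) s(a, b) = s((α ^ m) a, (α ^ m) b) := by
    rw [hβ, pairPerm_pow_apply]
    rfl
  rw [hpow] at hβm
  have hcase := Sym2.eq_iff.mp hβm
  rcases hcase with ⟨ha, hb⟩ | ⟨ha, hb⟩
  · have hfa : α a = a := by
      by_contra h
      have hdvd := card_dvd_of_pow_apply_eq α a h ha
      have h4 := hcyc a h
      have : 2 ∣ m := dvd_trans (by norm_num) (dvd_trans h4 hdvd)
      exact hodd this
    have hfb : α b = b := by
      by_contra h
      have hdvd := card_dvd_of_pow_apply_eq α b h hb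
      have h4 := hcyc b h
      have : 2 ∣ m := dvd_trans (by norm_num) (dvd_trans h4 hdvd)
      exact hodd this
    exact hne (hfix hfa hfb)
  · have hna : α a ≠ a := fun hf =>
      hne ((Equiv.Perm.pow_apply_eq_self_of_apply_eq_self hf m).symm.trans ha)
    have h2m : (α ^ (2 * m)) a = a := by
      rw [two_mul, pow_add, Equiv.Perm.mul_apply, ha, hb]
    have hdvd := card_dvd_of_pow_apply_eq α a hna h2m
    have h4 := hcyc a hna
    have h42 : 4 ∣ 2 * m := dvd_trans h4 hdvd
    omega
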